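/- Let K be a field, D a division K-algebra such that D ⊗_K D^o is a Noetherian ring, and δ₁, …, δ_t pairwise commuting K-derivations of D. Then the set Ev(Δ) := { λ = (λ₁,…,λ_t) ∈ K^t : there exists u ∈ D, u ≠ 0, with δᵢ(u) = λᵢ·u for all i = 1,…,t } is an additive subgroup of K^t and is a finitely generated abelian group. -/

import Mathlib

open TensorProduct
set_option linter.unusedSectionVars false
set_option maxHeartbeats 1000000

section Setup
variable {K D : Type*} [Field K] [DivisionRing D] [Algebra K D]
variable {t : ℕ} (δ : Fin t → (D →ₗ[K] D))

/-- common eigenspace -/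
def eig (lam : Fin t → K) : Submodule K D where
  carrier := {x | ∀ i, δ i x = lam i • x}
  add_mem' := by
    intro a b ha hb i
    simp [map_add, ha i, hb i, smul_add]
  zero_mem' := by intro i; simp
  smul_mem' := by
    intro c x hx i
    rw [map_smul, hx i, smul_comm]

lemma mem_eig {lam : Fin t → K} {x : D} : x ∈ eig δ lam ↔ ∀ i, δ i x = lam i • x := Iff.rfl

variable (hLeib : ∀ i, ∀ a b : D, δ i (a * b) = δ i a * b + a * δ i b)

include hLeib

lemma delta_one : ∀ i, δ i (1 : D) = 0 := by
  intro i
  have h := hLeib i 1 1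
  simp only [mul_one, one_mul] at h
  have := h.symm
  -- δ 1 = δ 1 + δ 1
  have : δ i (1:D) + δ i 1 = δ i 1 + 0 := by rw [add_zero]; exact h.symm
  exact (add_left_cancel this)

lemma one_mem_eig : (1 : D) ∈ eig δ 0 := by
  intro i; simp [delta_one δ hLeib]

lemma mul_mem_eig {lam mu : Fin t → K} {x y : D} (hx : x ∈ eig δ lam) (hy : y ∈ eig δ mu) :
    x * y ∈ eig δ (lam + mu) := by
  intro i
  rw [hLeib i x y, hx i, hy i]
  simp only [Pi.add_apply, add_smul, smul_mul_assoc, mul_smul_comm]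

lemma inv_mem_eig {lam : Fin t → K} {x : D} (hx : x ∈ eig δ lam) :
    x⁻¹ ∈ eig δ (-lam) := by
  rcases eq_or_ne x 0 with rfl | hx0
  · simp only [inv_zero]; exact (eig δ (-lam)).zero_mem
  · intro i
    have h := hLeib i x x⁻¹
    rw [mul_inv_cancel₀ hx0, delta_one δ hLeib, hx i] at h
    have h2 : x * δ i x⁻¹ = -(lam i • x * x⁻¹) := by
      rw [eq_neg_iff_add_eq_zero, add_comm]; exact h.symm
    have h3 : δ i x⁻¹ = x⁻¹ * -(lam i • x * x⁻¹) := by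
      rw [← h2, ← mul_assoc, inv_mul_cancel₀ hx0, one_mul]
    rw [h3]
    simp only [smul_mul_assoc, mul_inv_cancel₀ hx0, Pi.neg_apply, neg_smul, mul_neg,
      mul_smul_comm, mul_one]

omit hLeib

/-- independence of common eigenspaces -/
lemma eig_indep (s : Finset (Fin t → K)) :
    ∀ (c : (Fin t → K) → D), (∀ lam ∈ s, c lam ∈ eig δ lam) →
      ∑ lam ∈ s, c lam = 0 → ∀ lam ∈ s, c lam = 0 := by
  classical
  induction s using Finset.strongInduction with
  | _ s ih =>
    intro c hc hsum lam1 hlam1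
    by_cases hcard : s.card ≤ 1
    · -- singleton
      have : s = {lam1} := by
        apply Finset.eq_singleton_iff_unique_mem.mpr
        refine ⟨hlam1, fun y hy => ?_⟩
        by_contra hne
        have : 2 ≤ s.card := Finset.one_lt_card.mpr ⟨y, hy, lam1, hlam1, hne⟩
        omega
      rw [this, Finset.sum_singleton] at hsum
      exact hsum
    · push_neg at hcard
      obtain ⟨lam0, hlam0, hne⟩ : ∃ lam0 ∈ s, lam0 ≠ lam1 := by
        by_contra h
        push_neg at h
        have : s ⊆ {lam1} := fun y hy => Finset.mem_singleton.mpr (h y hy)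
        have := Finset.card_le_card this
        simp at this; omega
      obtain ⟨i, hi⟩ : ∃ i, lam0 i ≠ lam1 i := by
        by_contra h; push_neg at h; exact hne (funext h)
      -- apply δ i - lam0 i •
      set c' : (Fin t → K) → D := fun lam => (lam i - lam0 i) • c lam with hc'
      have hc'mem : ∀ lam ∈ s.erase lam0, c' lam ∈ eig δ lam := by
        intro lam hlam
        exact (eig δ lam).smul_mem _ (hc lam (Finset.mem_of_mem_erase hlam))
      have hsum' : ∑ lam ∈ s.erase lam0, c' lam = 0 := by
        have h1 : ∑ lam ∈ s, c' lam = δ i (∑ lam ∈ s, c lam) - lam0 i • (∑ lam ∈ s, c lam) := by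
          rw [map_sum, Finset.smul_sum, ← Finset.sum_sub_distrib]
          apply Finset.sum_congr rfl
          intro lam hlam
          rw [(hc lam hlam) i]
          simp only [hc', sub_smul]
        rw [hsum, map_zero, smul_zero, sub_zero] at h1
        rw [← h1]
        rw [Finset.sum_erase]
        simp [hc']
      have hind := ih (s.erase lam0) (Finset.erase_ssubset hlam0) c' hc'mem hsum'
      have h2 : c' lam1 = 0 := hind lam1 (Finset.mem_erase.mpr ⟨hne.symm, hlam1⟩)
      rw [hc'] at h2
      simp only at h2
      have hK : lam1 i - lam0 i ≠ 0 := sub_ne_zero.mpr (Ne.symm hi)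
      exact (smul_eq_zero_iff_right hK).mp h2

end Setup
section Setup2
variable {K D : Type*} [Field K] [DivisionRing D] [Algebra K D]
variable {t : ℕ} (δ : Fin t → (D →ₗ[K] D))

/-- set of eigenvalue tuples -/
def EvS : Set (Fin t → K) := {lam | ∃ u : D, u ≠ 0 ∧ u ∈ eig δ lam}

variable (hLeib : ∀ i, ∀ a b : D, δ i (a * b) = δ i a * b + a * δ i b)
include hLeib

lemma EvS_zero : (0 : Fin t → K) ∈ EvS δ := ⟨1, one_ne_zero, one_mem_eig δ hLeib⟩

lemma EvS_add {lam mu : Fin t → K} (h1 : lam ∈ EvS δ) (h2 : mu ∈ EvS δ) :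
    lam + mu ∈ EvS δ := by
  obtain ⟨u, hu, hue⟩ := h1
  obtain ⟨v, hv, hve⟩ := h2
  exact ⟨u * v, mul_ne_zero hu hv, mul_mem_eig δ hLeib hue hve⟩

lemma EvS_neg {lam : Fin t → K} (h1 : lam ∈ EvS δ) : -lam ∈ EvS δ := by
  obtain ⟨u, hu, hue⟩ := h1
  exact ⟨u⁻¹, inv_ne_zero hu, inv_mem_eig δ hLeib hue⟩

/-- the eigenvalue additive subgroup -/
def EvG : AddSubgroup (Fin t → K) where
  carrier := EvS δ
  add_mem' := EvS_add δ hLeib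
  zero_mem' := EvS_zero δ hLeib
  neg_mem' := EvS_neg δ hLeib

lemma zero_smul_eig {x : D} : x ∈ eig δ 0 ↔ ∀ i, δ i x = 0 := by
  simp [mem_eig]

/-- constants -/
def R0 : Subring D where
  carrier := (eig δ 0 : Set D)
  add_mem' h1 h2 := (eig δ 0).add_mem h1 h2
  zero_mem' := (eig δ 0).zero_mem
  neg_mem' h := (eig δ 0).neg_mem h
  one_mem' := one_mem_eig δ hLeib
  mul_mem' ha hb := by simpa using mul_mem_eig δ hLeib ha hb

lemma R0_inv_mem {x : D} (hx : x ∈ R0 δ hLeib) : x⁻¹ ∈ R0 δ hLeib := by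
  exact (by simpa using inv_mem_eig δ hLeib (lam := 0) hx : x⁻¹ ∈ eig δ 0)

noncomputable instance R0div : DivisionRing (R0 δ hLeib) :=
  DivisionRing.ofIsUnitOrEqZero (fun a => by
    rcases eq_or_ne a 0 with rfl | ha
    · exact Or.inr rfl
    · left
      have hD : (a : D) ≠ 0 := fun h => ha (Subtype.ext h)
      refine ⟨⟨a, ⟨(a : D)⁻¹, R0_inv_mem δ hLeib a.2⟩, ?_, ?_⟩, rfl⟩
      · exact Subtype.ext (mul_inv_cancel₀ hD)
      · exact Subtype.ext (inv_mul_cancel₀ hD))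

omit hLeib

open Classical in
noncomputable def uvec (lam : Fin t → K) : D :=
  if h : lam ∈ EvS δ then h.choose else 0

lemma uvec_spec {lam : Fin t → K} (h : lam ∈ EvS δ) :
    uvec δ lam ≠ 0 ∧ uvec δ lam ∈ eig δ lam := by
  classical
  rw [uvec]
  rw [dif_pos h]
  exact ⟨h.choose_spec.1, h.choose_spec.2⟩

include hLeib in
/-- eigenspaces are 1-dimensional over constants -/
lemma eig_eq_smul {lam : Fin t → K} (h : lam ∈ EvS δ) {x : D} (hx : x ∈ eig δ lam) :
    ∃ c ∈ R0 δ hLeib, x = c * uvec δ lam := by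
  obtain ⟨hu0, hue⟩ := uvec_spec δ h
  refine ⟨x * (uvec δ lam)⁻¹, ?_, by rw [mul_assoc, inv_mul_cancel₀ hu0, mul_one]⟩
  have := mul_mem_eig δ hLeib hx (inv_mem_eig δ hLeib hue)
  exact (by simpa using this : x * (uvec δ lam)⁻¹ ∈ eig δ 0)

end Setup2
section Setup3
open Pointwise
variable {K D : Type*} [Field K] [DivisionRing D] [Algebra K D]
variable {t : ℕ} (δ : Fin t → (D →ₗ[K] D))

/-- span of eigenspaces with eigenvalues in H -/
def BH (H : AddSubgroup (Fin t → K)) : Submodule K D := ⨆ (lam : H), eig δ (lam : Fin t → K)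

lemma eig_le_BH {H : AddSubgroup (Fin t → K)} {lam : Fin t → K} (h : lam ∈ H) :
    eig δ lam ≤ BH δ H := le_iSup (fun l : H => eig δ (l : Fin t → K)) ⟨lam, h⟩

lemma BH_mono {H H' : AddSubgroup (Fin t → K)} (h : H ≤ H') : BH δ H ≤ BH δ H' := by
  apply iSup_le
  intro lam
  exact eig_le_BH δ (h lam.2)

lemma BH_decomp {H : AddSubgroup (Fin t → K)} {x : D} (hx : x ∈ BH δ H) :
    ∃ (s : Finset (Fin t → K)) (c : (Fin t → K) → D),
      (∀ lam ∈ s, lam ∈ H ∧ lam ∈ EvS δ ∧ c lam ∈ eig δ lam ∧ c lam ≠ 0) ∧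
      x = ∑ lam ∈ s, c lam := by
  classical
  rw [BH, Submodule.mem_iSup_iff_exists_finsupp] at hx
  obtain ⟨f, hf, hsum⟩ := hx
  refine ⟨f.support.image (Subtype.val), fun lam => if h : lam ∈ H then f ⟨lam, h⟩ else 0, ?_, ?_⟩
  · intro lam hlam
    obtain ⟨i, hi, rfl⟩ := Finset.mem_image.mp hlam
    have hne : f i ≠ 0 := Finsupp.mem_support_iff.mp hi
    have hmem : f i ∈ eig δ (i : Fin t → K) := hf i
    refine ⟨i.2, ⟨f i, hne, hmem⟩, ?_, ?_⟩
    · simp only [dif_pos i.2, Subtype.coe_eta]; exact hmem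
    · simp only [dif_pos i.2, Subtype.coe_eta]; exact hne
  · rw [← hsum, Finsupp.sum, Finset.sum_image (by intro a _ b _ hab; exact Subtype.ext hab)]
    apply Finset.sum_congr rfl
    intro i _
    simp only [dif_pos i.2, Subtype.coe_eta]

lemma sum_mem_BH {H : AddSubgroup (Fin t → K)} {s : Finset (Fin t → K)}
    {c : (Fin t → K) → D} (h : ∀ lam ∈ s, lam ∈ H ∧ c lam ∈ eig δ lam) :
    ∑ lam ∈ s, c lam ∈ BH δ H :=
  Submodule.sum_mem _ fun lam hlam => eig_le_BH δ (h lam hlam).1 (h lam hlam).2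

variable (hLeib : ∀ i, ∀ a b : D, δ i (a * b) = δ i a * b + a * δ i b)
include hLeib in
/-- KEY (crux): no new eigenvectors among left fractions of `BH` -/
lemma crux {H : AddSubgroup (Fin t → K)} {mu : Fin t → K} (hmu : mu ∉ H)
    {v : D} (hv : v ∈ eig δ mu) (hv0 : v ≠ 0)
    {g : D} (hg : g ∈ BH δ H) (hgv : g * v ∈ BH δ H) : g = 0 := by
  classical
  obtain ⟨s, c, hs, rfl⟩ := BH_decomp δ hg
  obtain ⟨s', c', hs', hsum'⟩ := BH_decomp δ hgv
  -- the union finset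
  set U : Finset (Fin t → K) := s.image (fun l => l + mu) ∪ s' with hU
  set F : (Fin t → K) → D := fun kappa =>
    (if kappa ∈ s.image (fun l => l + mu) then c (kappa - mu) * v else 0) -
    (if kappa ∈ s' then c' kappa else 0) with hF
  have himg : ∀ kappa ∈ s.image (fun l => l + mu), kappa - mu ∈ s ∧ (kappa - mu) + mu = kappa := by
    intro kappa hk
    obtain ⟨l, hl, rfl⟩ := Finset.mem_image.mp hk
    simpa using hl
  have hFmem : ∀ kappa ∈ U, F kappa ∈ eig δ kappa := by
    intro kappa _
    rw [hF]
    apply Submodule.sub_mem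
    · split_ifs with hk
      · obtain ⟨h1, h2⟩ := himg kappa hk
        have := mul_mem_eig δ hLeib (hs _ h1).2.2.1 hv
        rwa [h2] at this
      · exact Submodule.zero_mem _
    · split_ifs with hk
      · exact (hs' _ hk).2.2.1
      · exact Submodule.zero_mem _
  have himgU : s.image (fun l => l + mu) ⊆ U := Finset.subset_union_left
  have hs'U : s' ⊆ U := Finset.subset_union_right
  have hA : ∑ kappa ∈ U, (if kappa ∈ s.image (fun l => l + mu) then c (kappa - mu) * v else 0)
      = (∑ lam ∈ s, c lam) * v := by
    rw [Finset.sum_ite_mem, Finset.inter_eq_right.mpr himgU,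
      Finset.sum_image (by intro a _ b _ hab; simpa using hab), Finset.sum_mul]
    apply Finset.sum_congr rfl
    intro l _
    simp
  have hB : ∑ kappa ∈ U, (if kappa ∈ s' then c' kappa else 0) = ∑ lam ∈ s', c' lam := by
    rw [Finset.sum_ite_mem, Finset.inter_eq_right.mpr hs'U]
  have hFsum : ∑ kappa ∈ U, F kappa = 0 := by
    rw [hF, Finset.sum_sub_distrib, hA, hB, ← hsum', sub_self]
  have hall := eig_indep δ U F hFmem hFsum
  have hempty : s = ∅ := by
    rw [Finset.eq_empty_iff_forall_notMem]
    intro lam hlam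
    have hk : lam + mu ∈ s.image (fun l => l + mu) := Finset.mem_image_of_mem _ hlam
    have h0 := hall (lam + mu) (himgU hk)
    rw [hF] at h0
    simp only at h0
    rw [if_pos hk, if_neg (by
      intro hmem
      have hlamH : lam ∈ H := (hs _ hlam).1
      have : lam + mu ∈ H := (hs' _ hmem).1
      have : mu ∈ H := by
        have := H.sub_mem this hlamH
        simpa using this
      exact hmu this)] at h0
    have hcv : c lam * v = 0 := by simpa using h0
    rcases mul_eq_zero.mp hcv with h | h
    · exact (hs _ hlam).2.2.2 h
    · exact hv0 h
  rw [hempty, Finset.sum_empty]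

end Setup3
section Growth
open Pointwise Filter

lemma exists_pow_lt_two_pow (r : ℕ) : ∃ n : ℕ, (n + 1) ^ r < 2 ^ n := by
  have h := tendsto_pow_const_div_const_pow_of_one_lt r (by norm_num : (1:ℝ) < 2)
  have h2 : ∀ᶠ n : ℕ in atTop, (n : ℝ) ^ r / 2 ^ n < 1 / 2 := by
    have := h.eventually (eventually_lt_nhds (by norm_num : (0:ℝ) < 1/2))
    exact this
  obtain ⟨N, hN⟩ := h2.exists_forall_of_atTop
  refine ⟨N, ?_⟩
  have hlt := hN (N + 1) (Nat.le_succ N)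
  have hpow : (0:ℝ) < 2 ^ (N + 1) := by positivity
  rw [div_lt_iff₀ hpow] at hlt
  have hfinal : ((N:ℝ) + 1) ^ r < 2 ^ N := by
    have h2N : (1:ℝ)/2 * 2 ^ (N+1) = 2 ^ N := by ring
    rw [h2N] at hlt
    push_cast at hlt
    exact hlt
  exact_mod_cast hfinal

variable {A : Type*} [AddCommGroup A] [DecidableEq A]

/-- iterated sumsets -/
def SS (T : Finset A) : ℕ → Finset A
  | 0 => {0}
  | n + 1 => SS T n + T

lemma SS_card_le (T : Finset A) (n : ℕ) : (SS T n).card ≤ (n + 1) ^ T.card := by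
  classical
  have key : ∀ n : ℕ, SS T n ⊆ (Fintype.piFinset (fun _ : {x // x ∈ T} => Finset.range (n+1))).image
      (fun c => ∑ x : {x // x ∈ T}, (c x : ℕ) • (x : A)) := by
    intro n
    induction n with
    | zero =>
      intro y hy
      rw [SS, Finset.mem_singleton] at hy
      subst hy
      apply Finset.mem_image.mpr
      refine ⟨fun _ => 0, ?_, by simp⟩
      simp [Fintype.mem_piFinset]
    | succ n ih =>
      intro y hy
      rw [SS, Finset.mem_add] at hy
      obtain ⟨a, ha, b, hb, rfl⟩ := hy
      obtain ⟨c, hc, hca⟩ := Finset.mem_image.mp (ih ha)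
      apply Finset.mem_image.mpr
      refine ⟨fun x => c x + (if x = ⟨b, hb⟩ then 1 else 0), ?_, ?_⟩
      · rw [Fintype.mem_piFinset]
        intro x
        rw [Finset.mem_range]
        have := Finset.mem_range.mp (Fintype.mem_piFinset.mp hc x)
        split_ifs <;> omega
      · rw [← hca]
        have : ∀ x : {x // x ∈ T}, (c x + (if x = ⟨b, hb⟩ then 1 else 0)) • (x : A)
            = c x • (x : A) + (if x = ⟨b, hb⟩ then 1 else 0) • (x : A) := by
          intro x; rw [add_smul]
        rw [Finset.sum_congr rfl (fun x _ => this x), Finset.sum_add_distrib]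
        congr 1
        have : ∀ x : {x // x ∈ T}, (if x = ⟨b, hb⟩ then 1 else 0) • (x:A)
            = (if x = ⟨b, hb⟩ then (x:A) else 0) := by
          intro x; split_ifs <;> simp
        rw [Finset.sum_congr rfl (fun x _ => this x),
          Finset.sum_ite_eq' Finset.univ (⟨b, hb⟩ : {x // x ∈ T})]
        simp
  calc (SS T n).card ≤ _ := Finset.card_le_card (key n)
    _ ≤ (Fintype.piFinset (fun _ : {x // x ∈ T} => Finset.range (n+1))).card :=
        Finset.card_image_le
    _ = (n + 1) ^ T.card := by
        rw [Fintype.card_piFinset]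
        simp [Finset.card_range, Finset.prod_const, Fintype.card_coe]

lemma SS_exists_slow (T : Finset A) : ∃ n : ℕ, (SS T (n+1)).card < 2 * (SS T n).card := by
  by_contra hcon
  push_neg at hcon
  have hlow : ∀ n, 2 ^ n ≤ (SS T n).card := by
    intro n
    induction n with
    | zero => simp [SS]
    | succ n ih =>
      calc 2 ^ (n+1) = 2 * 2 ^ n := by ring
      _ ≤ 2 * (SS T n).card := by omega
      _ ≤ (SS T (n+1)).card := hcon n
  obtain ⟨n, hn⟩ := exists_pow_lt_two_pow T.card
  have := hlow n
  have := SS_card_le T n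
  omega

lemma SS_zero_mem (T : Finset A) : (0 : A) ∈ SS T 0 := by simp [SS]

lemma SS_add_mem {T : Finset A} {n : ℕ} {a b : A} (ha : a ∈ SS T n) (hb : b ∈ T) :
    a + b ∈ SS T (n+1) := by
  rw [SS, Finset.mem_add]
  exact ⟨a, ha, b, hb, rfl⟩

end Growth
section Ore
open Pointwise
variable {K D : Type*} [Field K] [DivisionRing D] [Algebra K D]
variable {t : ℕ} (δ : Fin t → (D →ₗ[K] D))
variable (hLeib : ∀ i, ∀ a b : D, δ i (a * b) = δ i a * b + a * δ i b)
include hLeib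

lemma smul_R0_eq_mul (c : R0 δ hLeib) (x : D) : c • x = (c : D) * x := rfl

lemma mul_const_mem_BH {H : AddSubgroup (Fin t → K)} {c x : D}
    (hc : c ∈ eig δ 0) (hx : x ∈ BH δ H) : c * x ∈ BH δ H := by
  obtain ⟨s, cf, hs, rfl⟩ := BH_decomp δ hx
  rw [Finset.mul_sum]
  apply sum_mem_BH
  intro lam hlam
  refine ⟨(hs lam hlam).1, ?_⟩
  have := mul_mem_eig δ hLeib hc (hs lam hlam).2.2.1
  simpa using this

theorem ore {H : AddSubgroup (Fin t → K)} {g h : D} (hg : g ∈ BH δ H) (hh : h ∈ BH δ H)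
    (hg0 : g ≠ 0) (hh0 : h ≠ 0) :
    ∃ a b : D, a ∈ BH δ H ∧ b ∈ BH δ H ∧ a * g = b * h ∧ a * g ≠ 0 := by
  classical
  obtain ⟨s₁, c₁, hs₁, hg1⟩ := BH_decomp δ hg
  obtain ⟨s₂, c₂, hs₂, hh1⟩ := BH_decomp δ hh
  set T : Finset (Fin t → K) := s₁ ∪ s₂ with hT
  have hTmem : ∀ x ∈ T, x ∈ H ∧ x ∈ EvS δ := by
    intro x hx
    rcases Finset.mem_union.mp hx with hx | hx
    · exact ⟨(hs₁ x hx).1, (hs₁ x hx).2.1⟩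
    · exact ⟨(hs₂ x hx).1, (hs₂ x hx).2.1⟩
  have hSSmem : ∀ n, ∀ x ∈ SS T n, x ∈ H ∧ x ∈ EvS δ := by
    intro n
    induction n with
    | zero =>
      intro x hx
      rw [SS, Finset.mem_singleton] at hx
      subst hx
      exact ⟨H.zero_mem, EvS_zero δ hLeib⟩
    | succ n ih =>
      intro x hx
      rw [SS, Finset.mem_add] at hx
      obtain ⟨a, ha, b, hb, rfl⟩ := hx
      exact ⟨H.add_mem (ih a ha).1 (hTmem b hb).1,
        EvS_add δ hLeib (ih a ha).2 (hTmem b hb).2⟩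
  set R₀ := R0 δ hLeib with hR₀
  set V : ℕ → Submodule R₀ D := fun n =>
    Submodule.span R₀ (Set.range (fun i : ↥(SS T n) => uvec δ (i : Fin t → K))) with hV
  have h_eig_le_V : ∀ n, ∀ kappa ∈ SS T n, ∀ x ∈ eig δ kappa, x ∈ V n := by
    intro n kappa hk x hxe
    obtain ⟨c, hc, rfl⟩ := eig_eq_smul δ hLeib (hSSmem n kappa hk).2 hxe
    rw [← smul_R0_eq_mul δ hLeib ⟨c, hc⟩]
    exact Submodule.smul_mem _ _ (Submodule.subset_span ⟨⟨kappa, hk⟩, rfl⟩)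
  have hV_le_BH : ∀ n, ∀ x ∈ V n, x ∈ BH δ H := by
    intro n x hx
    refine Submodule.span_induction ?_ ?_ ?_ ?_ hx
    · rintro _ ⟨i, rfl⟩
      exact eig_le_BH δ (hSSmem n _ i.2).1 (uvec_spec δ (hSSmem n _ i.2).2).2
    · exact Submodule.zero_mem _
    · intro a b _ _ ha hb; exact Submodule.add_mem _ ha hb
    · intro c a _ ha
      rw [smul_R0_eq_mul]
      exact mul_const_mem_BH δ hLeib c.2 ha
  have hmulV : ∀ n (a : D), a ∈ V n →
      ∀ (w : D) (s : Finset (Fin t → K)) (c : (Fin t → K) → D), (↑s ⊆ ↑T) →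
      (∀ lam ∈ s, c lam ∈ eig δ lam) → w = ∑ lam ∈ s, c lam → a * w ∈ V (n+1) := by
    intro n a ha w s c hsT hc hw
    refine Submodule.span_induction ?_ ?_ ?_ ?_ ha
    · rintro _ ⟨i, rfl⟩
      rw [hw, Finset.mul_sum]
      apply Submodule.sum_mem
      intro lam hlam
      have hmem := mul_mem_eig δ hLeib (uvec_spec δ (hSSmem n _ i.2).2).2 (hc lam hlam)
      exact h_eig_le_V (n+1) _ (SS_add_mem i.2 (hsT hlam)) _ hmem
    · rw [zero_mul]; exact Submodule.zero_mem _
    · intro x y _ _ hx hy; rw [add_mul]; exact Submodule.add_mem _ hx hy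
    · intro cc x _ hx
      rw [smul_R0_eq_mul, mul_assoc, ← smul_R0_eq_mul δ hLeib]
      exact Submodule.smul_mem _ _ hx
  -- bases and dimension
  have hli : ∀ n, LinearIndependent R₀ (fun i : ↥(SS T n) => uvec δ (i : Fin t → K)) := by
    intro n
    rw [Fintype.linearIndependent_iff]
    intro gcoef hsum
    set G : (Fin t → K) → D := fun lam =>
      if hl : lam ∈ SS T n then (gcoef ⟨lam, hl⟩ : D) * uvec δ lam else 0 with hG
    have hsum2 : ∑ lam ∈ SS T n, G lam = 0 := by
      rw [Finset.sum_subtype (SS T n) (fun x => Iff.rfl) G, ← hsum]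
      apply Finset.sum_congr rfl
      intro i _
      rw [hG]
      simp only [dif_pos i.2, Subtype.coe_eta]
      rfl
    have hGmem : ∀ lam ∈ SS T n, G lam ∈ eig δ lam := by
      intro lam hl
      rw [hG]
      simp only [dif_pos hl]
      have := mul_mem_eig δ hLeib (gcoef ⟨lam, hl⟩).2 (uvec_spec δ (hSSmem n lam hl).2).2
      simpa using this
    have hall := eig_indep δ (SS T n) G hGmem hsum2
    intro i
    have h0 := hall (i : Fin t → K) i.2
    rw [hG] at h0
    simp only [dif_pos i.2, Subtype.coe_eta] at h0
    rcases mul_eq_zero.mp h0 with h0 | h0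
    · exact Subtype.ext h0
    · exact absurd h0 (uvec_spec δ (hSSmem n _ i.2).2).1
  have hfin : ∀ n, Module.Finite R₀ ↥(V n) := by
    intro n
    exact FiniteDimensional.span_of_finite R₀ (Set.finite_range _)
  have hrank : ∀ n, Module.finrank R₀ ↥(V n) = (SS T n).card := by
    intro n
    rw [hV]
    rw [finrank_span_eq_card (hli n)]
    exact Fintype.card_coe _
  obtain ⟨n, hslow⟩ := SS_exists_slow T
  haveI := hfin n
  haveI := hfin (n+1)
  -- the linear map
  set Ψ₀ : (↥(V n) × ↥(V n)) →ₗ[R₀] D :=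
    { toFun := fun p => (p.1 : D) * g - (p.2 : D) * h
      map_add' := by
        intro p q
        simp only [Prod.fst_add, Prod.snd_add, Submodule.coe_add, add_mul]
        abel
      map_smul' := by
        intro c p
        simp only [Prod.smul_fst, Prod.smul_snd, SetLike.val_smul, RingHom.id_apply]
        simp only [smul_R0_eq_mul δ hLeib]
        rw [mul_sub, mul_assoc, mul_assoc] } with hΨ₀
  have hrange : ∀ p : ↥(V n) × ↥(V n), Ψ₀ p ∈ V (n+1) := by
    intro p
    apply Submodule.sub_mem
    · exact hmulV n _ p.1.2 g s₁ c₁ (by rw [hT]; exact_mod_cast Finset.subset_union_left)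
        (fun lam hl => (hs₁ lam hl).2.2.1) hg1
    · exact hmulV n _ p.2.2 h s₂ c₂ (by rw [hT]; exact_mod_cast Finset.subset_union_right)
        (fun lam hl => (hs₂ lam hl).2.2.1) hh1
  set Ψ : (↥(V n) × ↥(V n)) →ₗ[R₀] ↥(V (n+1)) := Ψ₀.codRestrict _ hrange with hΨ
  have hnotinj : ¬ Function.Injective Ψ := by
    intro hinj
    have hle := LinearMap.finrank_le_finrank_of_injective hinj
    rw [Module.finrank_prod, hrank n, hrank (n+1)] at hle
    omega
  rw [Function.not_injective_iff] at hnotinj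
  obtain ⟨p, q, hpq, hne⟩ := hnotinj
  have hzero : Ψ₀ (p - q) = 0 := by
    have : Ψ (p - q) = 0 := by rw [map_sub, hpq, sub_self]
    have h2 : ((Ψ (p - q) : ↥(V (n+1))) : D) = Ψ₀ (p - q) := rfl
    rw [this] at h2
    exact h2.symm
  set a : D := ((p - q).1 : D) with hadef
  set b : D := ((p - q).2 : D) with hbdef
  have hzero' : a * g - b * h = 0 := hzero
  have hab : a * g = b * h := sub_eq_zero.mp hzero'
  have hr0 : p - q ≠ 0 := sub_ne_zero.mpr hne
  have ha0 : a ≠ 0 := by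
    intro h0
    have hb0 : b = 0 := by
      have hbh : b * h = 0 := by rw [← hab, h0, zero_mul]
      rcases mul_eq_zero.mp hbh with h' | h'
      · exact h'
      · exact absurd h' hh0
    exact hr0 (Prod.ext (Subtype.ext h0) (Subtype.ext hb0))
  exact ⟨a, b, hV_le_BH n _ (p - q).1.2, hV_le_BH n _ (p - q).2.2, hab,
    mul_ne_zero ha0 hg0⟩
end Ore
section QH
variable {K D : Type*} [Field K] [DivisionRing D] [Algebra K D]
variable {t : ℕ} (δ : Fin t → (D →ₗ[K] D))
variable (hLeib : ∀ i, ∀ a b : D, δ i (a * b) = δ i a * b + a * δ i b)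
include hLeib

lemma mul_mem_BH {H : AddSubgroup (Fin t → K)} {x y : D}
    (hx : x ∈ BH δ H) (hy : y ∈ BH δ H) : x * y ∈ BH δ H := by
  obtain ⟨s, c, hs, rfl⟩ := BH_decomp δ hx
  rw [Finset.sum_mul]
  apply Submodule.sum_mem
  intro lam hlam
  obtain ⟨s', c', hs', rfl⟩ := BH_decomp δ hy
  rw [Finset.mul_sum]
  apply Submodule.sum_mem
  intro nu hnu
  exact eig_le_BH δ (H.add_mem (hs lam hlam).1 (hs' nu hnu).1)
    (mul_mem_eig δ hLeib (hs lam hlam).2.2.1 (hs' nu hnu).2.2.1)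

lemma one_mem_BH {H : AddSubgroup (Fin t → K)} : (1 : D) ∈ BH δ H :=
  eig_le_BH δ H.zero_mem (one_mem_eig δ hLeib)

/-- the division subring of left fractions of BH -/
def QH (H : AddSubgroup (Fin t → K)) : Subring D where
  carrier := {x | ∃ g : D, g ∈ BH δ H ∧ g ≠ 0 ∧ g * x ∈ BH δ H}
  one_mem' := ⟨1, one_mem_BH δ hLeib, one_ne_zero, by
    rw [one_mul]; exact one_mem_BH δ hLeib⟩
  zero_mem' := ⟨1, one_mem_BH δ hLeib, one_ne_zero, by
    rw [mul_zero]; exact Submodule.zero_mem _⟩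
  neg_mem' := by
    rintro x ⟨g, hgB, hg0, hgx⟩
    exact ⟨g, hgB, hg0, by rw [mul_neg]; exact Submodule.neg_mem _ hgx⟩
  add_mem' := by
    rintro x y ⟨g, hgB, hg0, hgx⟩ ⟨h, hhB, hh0, hhy⟩
    obtain ⟨a, b, haB, hbB, hab, hab0⟩ := ore δ hLeib hgB hhB hg0 hh0
    refine ⟨a * g, mul_mem_BH δ hLeib haB hgB, hab0, ?_⟩
    have : a * g * (x + y) = a * (g * x) + b * (h * y) := by
      rw [mul_add]
      congr 1
      · rw [mul_assoc]
      · rw [hab, mul_assoc]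
    rw [this]
    exact Submodule.add_mem _ (mul_mem_BH δ hLeib haB hgx) (mul_mem_BH δ hLeib hbB hhy)
  mul_mem' := by
    rintro x y ⟨g, hgB, hg0, hgx⟩ ⟨h, hhB, hh0, hhy⟩
    rcases eq_or_ne (g * x) 0 with hf0 | hf0
    · have hx0 : x = 0 := by
        rcases mul_eq_zero.mp hf0 with h' | h'
        · exact absurd h' hg0
        · exact h'
      refine ⟨1, one_mem_BH δ hLeib, one_ne_zero, ?_⟩
      rw [hx0, zero_mul, mul_zero]
      exact Submodule.zero_mem _
    · obtain ⟨a, b, haB, hbB, hab, hab0⟩ := ore δ hLeib hgx hhB hf0 hh0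
      have ha0 : a ≠ 0 := by
        intro h0; rw [h0, zero_mul] at hab0; exact hab0 rfl
      refine ⟨a * g, mul_mem_BH δ hLeib haB hgB, mul_ne_zero ha0 hg0, ?_⟩
      have : a * g * (x * y) = b * (h * y) := by
        rw [mul_assoc, ← mul_assoc g x y, ← mul_assoc a (g*x) y, hab, mul_assoc]
      rw [this]
      exact mul_mem_BH δ hLeib hbB hhy

lemma BH_le_QH {H : AddSubgroup (Fin t → K)} {x : D} (hx : x ∈ BH δ H) :
    x ∈ QH δ hLeib H :=
  ⟨1, one_mem_BH δ hLeib, one_ne_zero, by rw [one_mul]; exact hx⟩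

lemma QH_inv_mem {H : AddSubgroup (Fin t → K)} {x : D} (hx : x ∈ QH δ hLeib H) :
    x⁻¹ ∈ QH δ hLeib H := by
  rcases eq_or_ne x 0 with rfl | hx0
  · rw [inv_zero]; exact (QH δ hLeib H).zero_mem
  · obtain ⟨g, hgB, hg0, hgx⟩ := hx
    have hf0 : g * x ≠ 0 := mul_ne_zero hg0 hx0
    refine ⟨g * x, hgx, hf0, ?_⟩
    rw [mul_assoc, mul_inv_cancel₀ hx0, mul_one]
    exact hgB

@[reducible] noncomputable def QHdiv (H : AddSubgroup (Fin t → K)) : DivisionRing (QH δ hLeib H) :=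
  DivisionRing.ofIsUnitOrEqZero (fun a => by
    rcases eq_or_ne a 0 with rfl | ha
    · exact Or.inr rfl
    · left
      have hD : (a : D) ≠ 0 := fun h => ha (Subtype.ext h)
      refine ⟨⟨a, ⟨(a : D)⁻¹, QH_inv_mem δ hLeib a.2⟩, ?_, ?_⟩, rfl⟩
      · exact Subtype.ext (mul_inv_cancel₀ hD)
      · exact Subtype.ext (inv_mul_cancel₀ hD))

lemma eig_not_mem_QH {H : AddSubgroup (Fin t → K)} {mu : Fin t → K} (hmu : mu ∉ H)
    {v : D} (hv : v ∈ eig δ mu) (hv0 : v ≠ 0) : v ∉ QH δ hLeib H := by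
  rintro ⟨g, hgB, hg0, hgv⟩
  exact hg0 (crux δ hLeib hmu hv hv0 hgB hgv)

end QH
section Sep
open MulOpposite
variable {K D : Type*} [Field K] [DivisionRing D] [Algebra K D]
variable {t : ℕ} (δ : Fin t → (D →ₗ[K] D))
variable (hLeib : ∀ i, ∀ a b : D, δ i (a * b) = δ i a * b + a * δ i b)
include hLeib

lemma algebraMap_mem_QH {H : AddSubgroup (Fin t → K)} (k : K) :
    algebraMap K D k ∈ QH δ hLeib H := by
  apply BH_le_QH δ hLeib
  apply eig_le_BH δ H.zero_mem
  rw [Algebra.algebraMap_eq_smul_one]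
  exact (eig δ 0).smul_mem k (one_mem_eig δ hLeib)

lemma gen_not_mem_span {H : AddSubgroup (Fin t → K)} {mu : Fin t → K} (hmu : mu ∉ H)
    {u : D} (hue : u ∈ eig δ mu) (hu0 : u ≠ 0) :
    u ⊗ₜ[K] (1 : Dᵐᵒᵖ) - 1 ⊗ₜ[K] (op u) ∉
      Submodule.span (D ⊗[K] Dᵐᵒᵖ)
        {z | ∃ x ∈ BH δ H, z = x ⊗ₜ[K] (1 : Dᵐᵒᵖ) - 1 ⊗ₜ[K] op x} := by
  classical
  letI : DivisionRing (QH δ hLeib H) := QHdiv δ hLeib H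
  have huE : u ∉ QH δ hLeib H := eig_not_mem_QH δ hLeib hmu hue hu0
  have h1E : (1:D) ∈ QH δ hLeib H := (QH δ hLeib H).one_mem
  have hu1 : u ≠ 1 := fun h => huE (h ▸ h1E)
  have hns : u ∉ ({1} : Set D) := by simp [hu1]
  have hli : LinearIndepOn (QH δ hLeib H) id (insert u {1} : Set D) := by
    rw [linearIndepOn_id_insert hns]
    constructor
    · exact (linearIndepOn_singleton_iff _).mpr one_ne_zero
    · intro hmem
      rw [Submodule.mem_span_singleton] at hmem
      obtain ⟨c, hc⟩ := hmem
      apply huE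
      have hcu : u = (c : D) * 1 := by rw [← hc]; rfl
      rw [hcu, mul_one]
      exact c.2
  set b := Module.Basis.extend hli with hb
  have hus : u ∈ hli.extend (Set.subset_univ _) :=
    hli.subset_extend _ (by simp)
  have h1s : (1:D) ∈ hli.extend (Set.subset_univ _) :=
    hli.subset_extend _ (by simp)
  set iu : ↥(hli.extend (Set.subset_univ _)) := ⟨u, hus⟩ with hiu
  set i1 : ↥(hli.extend (Set.subset_univ _)) := ⟨1, h1s⟩ with hi1
  have hi_ne : iu ≠ i1 := by
    intro h
    exact hu1 (by simpa [hiu, hi1, Subtype.ext_iff] using h)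
  -- coordinate map
  set cmap : D → (↥(hli.extend (Set.subset_univ _)) →₀ D) :=
    fun d => (b.repr d).mapRange (fun e : QH δ hLeib H => (e : D)) rfl with hcmap
  have hcmap_add : ∀ d1 d2, cmap (d1 + d2) = cmap d1 + cmap d2 := by
    intro d1 d2
    rw [hcmap]
    simp only [map_add]
    ext j
    simp [Finsupp.mapRange_apply]
  have hcmap_mul : ∀ (x : D) (hx : x ∈ QH δ hLeib H) (d : D),
      cmap (x * d) = x • cmap d := by
    intro x hx d
    have hx' : x * d = (⟨x, hx⟩ : QH δ hLeib H) • d := rfl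
    rw [hcmap]
    simp only [hx', map_smul]
    ext j
    simp only [Finsupp.mapRange_apply, Finsupp.smul_apply]
    rfl
  have hcmap_smul : ∀ (k : K) (d : D), cmap (k • d) = k • cmap d := by
    intro k d
    have h1 : k • d = algebraMap K D k * d := Algebra.smul_def k d
    rw [h1, hcmap_mul _ (algebraMap_mem_QH δ hLeib k) d]
    ext j
    simp only [Finsupp.smul_apply, smul_eq_mul, Algebra.smul_def]
  -- the bilinear map
  set β : D →ₗ[K] Dᵐᵒᵖ →ₗ[K] (↥(hli.extend (Set.subset_univ _)) →₀ D) :=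
    LinearMap.mk₂ K (fun d dop => d • cmap (unop dop))
      (fun d1 d2 n => by simp only [add_smul])
      (fun k d n => by simp only [smul_assoc])
      (fun d n1 n2 => by simp only [unop_add, hcmap_add, smul_add])
      (fun k d n => by simp only [unop_smul, hcmap_smul]; rw [smul_comm]) with hβ
  set Φ : (D ⊗[K] Dᵐᵒᵖ) →ₗ[K] (↥(hli.extend (Set.subset_univ _)) →₀ D) :=
    TensorProduct.lift β with hΦ
  have hΦtmul : ∀ (d : D) (dop : Dᵐᵒᵖ), Φ (d ⊗ₜ[K] dop) = d • cmap (unop dop) := by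
    intro d dop
    rw [hΦ, TensorProduct.lift.tmul]
    rfl
  -- the kill submodule
  set TT : Submodule (D ⊗[K] Dᵐᵒᵖ) (D ⊗[K] Dᵐᵒᵖ) :=
    { carrier := {y | ∀ r : D ⊗[K] Dᵐᵒᵖ, Φ (r * y) = 0}
      add_mem' := by
        intro a b ha hb r
        rw [mul_add, map_add, ha r, hb r, add_zero]
      zero_mem' := by
        intro r
        rw [mul_zero, map_zero]
      smul_mem' := by
        intro c y hy r
        rw [smul_eq_mul, ← mul_assoc]
        exact hy (r * c) } with hTT
  have hgens : ∀ x ∈ BH δ H, (x ⊗ₜ[K] (1 : Dᵐᵒᵖ) - 1 ⊗ₜ[K] op x) ∈ TT := by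
    intro x hx
    intro r
    induction r using TensorProduct.induction_on with
    | zero => rw [zero_mul, map_zero]
    | tmul d dop =>
      rw [mul_sub, Algebra.TensorProduct.tmul_mul_tmul, Algebra.TensorProduct.tmul_mul_tmul,
        map_sub, mul_one, mul_one, hΦtmul, hΦtmul]
      have hop : unop (dop * op x) = x * unop dop := rfl
      rw [hop, hcmap_mul _ (BH_le_QH δ hLeib hx) (unop dop), mul_smul]
      rw [sub_eq_zero]
    | add r1 r2 h1 h2 =>
      rw [add_mul, map_add, h1, h2, add_zero]
  have hspan : Submodule.span (D ⊗[K] Dᵐᵒᵖ)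
      {z | ∃ x ∈ BH δ H, z = x ⊗ₜ[K] (1 : Dᵐᵒᵖ) - 1 ⊗ₜ[K] op x} ≤ TT := by
    rw [Submodule.span_le]
    rintro z ⟨x, hx, rfl⟩
    exact hgens x hx
  -- the nonvanishing
  intro hmem
  have hz := hspan hmem 1
  rw [one_mul, map_sub, hΦtmul, hΦtmul] at hz
  have hrepr1 : b.repr 1 = Finsupp.single i1 1 := by
    have hb1 : b i1 = 1 := Module.Basis.extend_apply_self hli i1
    have hh := b.repr_self i1
    rw [hb1] at hh
    exact hh
  have hrepru : b.repr u = Finsupp.single iu 1 := by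
    have hbu : b iu = u := Module.Basis.extend_apply_self hli iu
    have hh := b.repr_self iu
    rw [hbu] at hh
    exact hh
  have hc1 : cmap (unop (1 : Dᵐᵒᵖ)) = Finsupp.single i1 1 := by
    rw [hcmap]
    simp only [unop_one, hrepr1]
    rw [Finsupp.mapRange_single]
    rfl
  have hcu : cmap (unop (op u)) = Finsupp.single iu 1 := by
    rw [hcmap]
    simp only [unop_op, hrepru]
    rw [Finsupp.mapRange_single]
    rfl
  rw [hc1, hcu] at hz
  have heval := congrArg (fun w => w i1) hz
  simp only [Finsupp.sub_apply, Finsupp.smul_apply, Finsupp.single_eq_same,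
    Finsupp.coe_zero, Pi.zero_apply] at heval
  rw [Finsupp.single_eq_of_ne' hi_ne] at heval
  apply hu0
  simpa using heval

end Sep

/-- Let `D` be a division `K`-algebra with `D ⊗[K] Dᵐᵒᵖ` Noetherian and let
`δ₁, …, δ_t` be pairwise commuting `K`-derivations of `D`.  Then the set of common
eigenvalue tuples is an additive subgroup of `K^t` which is finitely generated. -/
theorem stmt2 (K D : Type*) [Field K] [DivisionRing D] [Algebra K D]
    (hNoeth : IsNoetherianRing (D ⊗[K] Dᵐᵒᵖ))
    (t : ℕ) (δ : Fin t → (D →ₗ[K] D))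
    (hLeib : ∀ i, ∀ a b : D, δ i (a * b) = δ i a * b + a * δ i b)
    (hcomm : ∀ i j, ∀ x : D, δ i (δ j x) = δ j (δ i x)) :
    ∃ G : AddSubgroup (Fin t → K),
      (G : Set (Fin t → K)) =
        {lam : Fin t → K | ∃ u : D, u ≠ 0 ∧ ∀ i, δ i u = lam i • u} ∧
      G.FG := by
  classical
  refine ⟨EvG δ hLeib, rfl, ?_⟩
  by_contra hnotfg
  have key : ∀ s : Finset (Fin t → K), ↑s ⊆ EvS δ →
      ∃ mu, mu ∈ EvS δ ∧ mu ∉ AddSubgroup.closure (↑s : Set (Fin t → K)) := by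
    intro s hs
    by_contra hcon
    push_neg at hcon
    apply hnotfg
    refine ⟨s, ?_⟩
    apply le_antisymm
    · exact (AddSubgroup.closure_le _).mpr hs
    · intro mu hmu
      exact hcon mu hmu
  let step : {s : Finset (Fin t → K) // ↑s ⊆ EvS δ} → {s : Finset (Fin t → K) // ↑s ⊆ EvS δ} :=
    fun p => ⟨insert (key p.1 p.2).choose p.1, by
      rw [Finset.coe_insert]
      exact Set.insert_subset (key p.1 p.2).choose_spec.1 p.2⟩
  let f : ℕ → {s : Finset (Fin t → K) // ↑s ⊆ EvS δ} :=
    fun n => step^[n] ⟨∅, by simp⟩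
  have hf_succ : ∀ n, f (n+1) = step (f n) := fun n =>
    Function.iterate_succ_apply' step n _
  set Hn : ℕ → AddSubgroup (Fin t → K) :=
    fun n => AddSubgroup.closure ↑(f n).1 with hHn
  set mun : ℕ → (Fin t → K) := fun n => (key (f n).1 (f n).2).choose with hmun
  have hmu_Ev : ∀ n, mun n ∈ EvS δ := fun n => (key (f n).1 (f n).2).choose_spec.1
  have hmu_not : ∀ n, mun n ∉ Hn n := fun n => (key (f n).1 (f n).2).choose_spec.2
  have hmu_mem : ∀ n, mun n ∈ Hn (n+1) := by
    intro n
    apply AddSubgroup.subset_closure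
    rw [hf_succ n]
    simp only [step, Finset.coe_insert]
    exact Set.mem_insert _ _
  have hHn_mono : ∀ n, Hn n ≤ Hn (n+1) := by
    intro n
    apply AddSubgroup.closure_mono
    rw [hf_succ n]
    simp only [step, Finset.coe_insert]
    exact Set.subset_insert _ _
  set gens : AddSubgroup (Fin t → K) → Set (D ⊗[K] Dᵐᵒᵖ) := fun H =>
    {z | ∃ x ∈ BH δ H, z = x ⊗ₜ[K] (1 : Dᵐᵒᵖ) - 1 ⊗ₜ[K] MulOpposite.op x} with hgensdef
  set J : ℕ → Submodule (D ⊗[K] Dᵐᵒᵖ) (D ⊗[K] Dᵐᵒᵖ) :=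
    fun n => Submodule.span _ (gens (Hn n)) with hJ
  have hJmono : Monotone J := by
    apply monotone_nat_of_le_succ
    intro n
    apply Submodule.span_mono
    rintro z ⟨x, hx, rfl⟩
    exact ⟨x, BH_mono δ (hHn_mono n) hx, rfl⟩
  obtain ⟨n0, hst⟩ := monotone_stabilizes_iff_noetherian.mpr hNoeth ⟨J, hJmono⟩
  have hstab : J n0 = J (n0 + 1) := hst (n0 + 1) (Nat.le_succ n0)
  set u : D := uvec δ (mun n0) with hu
  have huspec := uvec_spec δ (hmu_Ev n0)
  have hgen_in : u ⊗ₜ[K] (1 : Dᵐᵒᵖ) - 1 ⊗ₜ[K] MulOpposite.op u ∈ J (n0 + 1) :=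
    Submodule.subset_span ⟨u, eig_le_BH δ (hmu_mem n0) huspec.2, rfl⟩
  have hgen_not : u ⊗ₜ[K] (1 : Dᵐᵒᵖ) - 1 ⊗ₜ[K] MulOpposite.op u ∉ J n0 :=
    gen_not_mem_span δ hLeib (hmu_not n0) huspec.2 huspec.1
  rw [← hstab] at hgen_in
  exact hgen_not hgen_in
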